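/- Fix an integer capacity u ≥ 1. Let n be a positive integer, let x_1, …, x_n ∈ [0, 1], let y ∈ ℝ≥0, and set y' = (Σ_{j=1}^n x_j)/u. Suppose that y' ≥ ⌊y⌋ and that for every subset J ⊆ {1, …, n}, Σ_{j∈J} x_j ≤ f(|J|, y). Then Σ_{j=1}^n x_j·(1 − x_j) ≥ u·{y'}·(⌈y⌉ − y), where {y'} = y' − ⌊y'⌋ denotes the fractional part of y'. -/

import Mathlib

/-- The function `f(p, q)` from Section 3 of the paper, for capacity `u`:
`f(p,q) = qu` if `q ≤ ⌊p/u⌋`;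
`f(p,q) = u⌊p/u⌋ + u·{p/u}·(q − ⌊p/u⌋)` if `⌊p/u⌋ < q < ⌈p/u⌉`;
`f(p,q) = p` if `q ≥ ⌈p/u⌉`. -/
noncomputable def f (u : ℕ) (p : ℕ) (q : ℝ) : ℝ :=
  if q ≤ (⌊(p : ℝ) / (u : ℝ)⌋ : ℝ) then q * u
  else if q < (⌈(p : ℝ) / (u : ℝ)⌉ : ℝ) then
    (u : ℝ) * (⌊(p : ℝ) / (u : ℝ)⌋ : ℝ)
      + (u : ℝ) * Int.fract ((p : ℝ) / (u : ℝ)) * (q - (⌊(p : ℝ) / (u : ℝ)⌋ : ℝ))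
  else (p : ℝ)

lemma f_le (u : ℕ) (hu : 1 ≤ u) (p : ℕ) (q : ℝ) (hq : 0 ≤ q) : f u p q ≤ q * u := by
  have hu0 : (0:ℝ) < u := by exact_mod_cast hu
  unfold f
  split_ifs with h1 h2
  · exact le_rfl
  · push_neg at h1
    have hfr0 := Int.fract_nonneg ((p:ℝ)/u)
    have hfr1 := Int.fract_lt_one ((p:ℝ)/u)
    have key : 0 ≤ (u:ℝ) * (q - (⌊(p : ℝ) / (u : ℝ)⌋ : ℝ)) * (1 - Int.fract ((p:ℝ)/u)) :=
      mul_nonneg (mul_nonneg hu0.le (by linarith)) (by linarith)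
    nlinarith [key]
  · push_neg at h2
    have : (p:ℝ)/u ≤ (⌈(p : ℝ) / (u : ℝ)⌉ : ℝ) := Int.le_ceil _
    have h3 : (p:ℝ)/u ≤ q := le_trans this h2
    rw [div_le_iff₀ hu0] at h3
    exact h3

lemma f_mid (u m p : ℕ) (hu : 1 ≤ u) (h1 : u * m < p) (h2 : p < u * (m+1))
    (q : ℝ) (hq1 : (m:ℝ) < q) (hq2 : q < m + 1) :
    f u p q = (u:ℝ) * m + ((p:ℝ) - u * m) * (q - m) := by
  have hu0 : (0:ℝ) < u := by exact_mod_cast hu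
  have hl : (m:ℝ) < (p:ℝ)/u := by
    rw [lt_div_iff₀ hu0]
    have : ((u*m : ℕ):ℝ) < (p:ℝ) := by exact_mod_cast h1
    push_cast at this; linarith
  have hr : (p:ℝ)/u < (m:ℝ)+1 := by
    rw [div_lt_iff₀ hu0]
    have : ((p : ℕ):ℝ) < ((u*(m+1) : ℕ):ℝ) := by exact_mod_cast h2
    push_cast at this; linarith
  have hfl : ⌊(p:ℝ)/u⌋ = (m:ℤ) := by
    rw [Int.floor_eq_iff]
    constructor <;> [skip; skip] <;> push_cast <;> linarith
  have hcl : ⌈(p:ℝ)/u⌉ = (m:ℤ)+1 := by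
    rw [Int.ceil_eq_iff]
    constructor <;> push_cast <;> linarith
  have hfr : Int.fract ((p:ℝ)/u) = (p:ℝ)/u - m := by
    rw [Int.fract, hfl]; push_cast; ring
  unfold f
  rw [hfl, hcl, hfr]
  rw [if_neg (by push_cast; linarith), if_pos (by push_cast; linarith)]
  push_cast
  field_simp
  try ring

set_option maxHeartbeats 1600000 in
/-- **Lemma 4.3.** If `x_1, …, x_n ∈ [0,1]`, `y' = (Σ_j x_j)/u ≥ ⌊y⌋` and the rectangle
constraint `Σ_{j∈J} x_j ≤ f(|J|, y)` holds for every `J ⊆ [n]`, then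
`Σ_j x_j(1 − x_j) ≥ u·{y'}·(⌈y⌉ − y)`. -/
theorem stmt10 (u : ℕ) (hu : 1 ≤ u) (n : ℕ) (hn : 0 < n)
    (x : Fin n → ℝ) (hx : ∀ j, x j ∈ Set.Icc (0 : ℝ) 1)
    (y : ℝ) (hy : 0 ≤ y)
    (y' : ℝ) (hy' : y' = (∑ j, x j) / u)
    (hfloor : (⌊y⌋ : ℝ) ≤ y')
    (hrect : ∀ J : Finset (Fin n), ∑ j ∈ J, x j ≤ f u J.card y) :
    (u : ℝ) * Int.fract y' * ((⌈y⌉ : ℝ) - y) ≤ ∑ j, x j * (1 - x j) := by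
  have hu0 : (0:ℝ) < u := by exact_mod_cast hu
  have hx0 : ∀ j, 0 ≤ x j := fun j => (hx j).1
  have hx1 : ∀ j, x j ≤ 1 := fun j => (hx j).2
  set S := ∑ j, x j with hS
  have hS0 : 0 ≤ S := Finset.sum_nonneg fun j _ => hx0 j
  have hLHS0 : 0 ≤ ∑ j, x j * (1 - x j) :=
    Finset.sum_nonneg fun j _ => mul_nonneg (hx0 j) (by linarith [hx1 j])
  rcases eq_or_lt_of_le (Int.le_ceil y) with hceil | hceil
  · have h0 : (⌈y⌉:ℝ) - y = 0 := by linarith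
    rw [h0, mul_zero]
    exact hLHS0
  -- main case: y is not an integer
  have hfly : (⌊y⌋:ℝ) < y := by
    rcases eq_or_lt_of_le (Int.floor_le y) with h | h
    · exfalso
      have : y = ((⌊y⌋:ℤ):ℝ) := h.symm
      rw [this, Int.ceil_intCast] at hceil
      exact lt_irrefl _ (this ▸ hceil)
    · exact h
  have hfl0 : 0 ≤ ⌊y⌋ := Int.floor_nonneg.2 hy
  set m : ℕ := ⌊y⌋.toNat with hm
  have hmr : ((m:ℕ):ℝ) = ((⌊y⌋:ℤ):ℝ) := by
    rw [hm]; exact_mod_cast Int.toNat_of_nonneg hfl0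
  have hm1 : (m:ℝ) < y := by rw [hmr]; exact hfly
  have hm2 : y < (m:ℝ) + 1 := by
    have h := Int.lt_floor_add_one y
    rw [← hmr] at h; exact h
  have hceilm : (⌈y⌉:ℝ) = (m:ℝ) + 1 := by
    have hle : ⌈y⌉ ≤ ⌊y⌋ + 1 := Int.ceil_le_floor_add_one y
    have hlt : ⌊y⌋ < ⌈y⌉ := by
      have : (⌊y⌋:ℝ) < (⌈y⌉:ℝ) := lt_trans hfly hceil
      exact_mod_cast this
    have h3 : ⌈y⌉ = ⌊y⌋ + 1 := le_antisymm hle hlt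
    rw [h3]; push_cast; linarith [hmr]
  set t : ℝ := y - m with ht
  have ht0 : 0 < t := by rw [ht]; linarith
  have ht1 : t < 1 := by rw [ht]; linarith
  -- S ≤ y * u
  have hSuy : S ≤ y * u := by
    have := hrect Finset.univ
    exact le_trans this (f_le u hu _ y hy)
  have hmS : (u:ℝ) * m ≤ S := by
    rw [hy'] at hfloor
    rw [← hmr] at hfloor
    rw [le_div_iff₀ hu0] at hfloor
    linarith
  -- fract y' = S/u - m
  have hfy' : Int.fract y' = S / u - m := by
    rw [Int.fract, hy']
    congr 1
    have : ⌊S / u⌋ = (m:ℤ) := by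
      rw [Int.floor_eq_iff]
      constructor
      · rw [le_div_iff₀ hu0]; push_cast; linarith
      · rw [div_lt_iff₀ hu0]; push_cast; nlinarith
    rw [this]; push_cast; ring
  -- the key set J
  set J : Finset (Fin n) := Finset.univ.filter (fun j => t < x j) with hJ
  set p : ℕ := J.card with hp
  set A : ℝ := ∑ j ∈ J, x j with hA
  have hAf : A ≤ f u p y := hrect J
  -- key bound: A - p*t ≤ u*m*(1-t)
  have hkey : A - p * t ≤ (u:ℝ) * m * (1 - t) := by
    rcases le_or_gt p (u * m) with hcase | hcase
    · have hAp : A ≤ (p:ℝ) := by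
        calc A ≤ ∑ _j ∈ J, (1:ℝ) := Finset.sum_le_sum fun j _ => hx1 j
        _ = (p:ℝ) := by rw [Finset.sum_const, nsmul_eq_mul, mul_one]
      have hpm : (p:ℝ) ≤ (u:ℝ) * m := by exact_mod_cast hcase
      nlinarith
    · rcases lt_or_ge p (u * (m+1)) with hcase2 | hcase2
      · have := f_mid u m p hu hcase hcase2 y hm1 hm2
        rw [this] at hAf
        have : (y:ℝ) - m = t := by rw [ht]
        rw [this] at hAf
        nlinarith
      · have hfle := f_le u hu p y hy
        have hple : (u:ℝ) * (m+1) ≤ (p:ℝ) := by exact_mod_cast hcase2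
        have : y = (m:ℝ) + t := by rw [ht]; ring
        nlinarith
  have hsum : (1 - t) * S - (A - p * t) ≤ ∑ j, x j * (1 - x j) := by
    have hsplitS : ∑ j ∈ J, x j + ∑ j ∈ Finset.univ.filter (fun j => ¬ t < x j), x j = S := by
      rw [hS, hJ]; exact Finset.sum_filter_add_sum_filter_not _ _ _
    have hsplitL : ∑ j ∈ J, (x j * (1 - x j)) +
        ∑ j ∈ Finset.univ.filter (fun j => ¬ t < x j), (x j * (1 - x j))
        = ∑ j, x j * (1 - x j) := by
      rw [hJ]; exact Finset.sum_filter_add_sum_filter_not _ _ _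
    have h1 : (1 - t) * A - (A - p * t) ≤ ∑ j ∈ J, (x j * (1 - x j)) := by
      have hpt : ∀ j ∈ J, (1 - t) * x j - (x j - t) ≤ x j * (1 - x j) := by
        intro j hj
        rw [hJ, Finset.mem_filter] at hj
        nlinarith [hx1 j, hj.2]
      have := Finset.sum_le_sum hpt
      rw [Finset.sum_sub_distrib, Finset.sum_sub_distrib, ← Finset.mul_sum,
        Finset.sum_const, nsmul_eq_mul, ← hA, ← hp] at this
      linarith
    have h2 : (1 - t) * ∑ j ∈ Finset.univ.filter (fun j => ¬ t < x j), x j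
        ≤ ∑ j ∈ Finset.univ.filter (fun j => ¬ t < x j), (x j * (1 - x j)) := by
      rw [Finset.mul_sum]
      refine Finset.sum_le_sum fun j hj => ?_
      rw [Finset.mem_filter] at hj
      push_neg at hj
      nlinarith [hx0 j, hj.2]
    nlinarith [h1, h2, hsplitS, hsplitL]
  have hRHS : (u:ℝ) * Int.fract y' * ((⌈y⌉:ℝ) - y) = (S - u * m) * (1 - t) := by
    rw [hfy', hceilm]
    have : (m:ℝ) + 1 - y = 1 - t := by rw [ht]; ring
    rw [this]
    have huS : (u:ℝ) * (S / u - m) = S - u * m := by field_simp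
    rw [huS]
  rw [hRHS]
  nlinarith [hsum, hkey]
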